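/- Let D be the open unit ball of a JB*-triple V. If (y_k) is a sequence in D converging in norm to a point ξ ∈ ∂D (i.e. ‖ξ‖ = 1), then for every z ∈ D one has lim_k ‖g_{−y_k}(z)‖ = 1, where g_{−y} is the Möbius transformation of D mapping y to 0. -/

import Mathlib

open scoped ComplexConjugate

class JBStarTriple (V : Type*) [NormedAddCommGroup V] [NormedSpace ℂ V] where
  tp : V → V → V → V
  box : V → V → V →L[ℂ] V
  box_apply : ∀ a b x : V, box a b x = tp a b x
  add_fst : ∀ a a' b c : V, tp (a + a') b c = tp a b c + tp a' b c
  smul_fst : ∀ (α : ℂ) (a b c : V), tp (α • a) b c = α • tp a b c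
  symm_outer : ∀ a b c : V, tp a b c = tp c b a
  add_snd : ∀ a b b' c : V, tp a (b + b') c = tp a b c + tp a b' c
  conj_snd : ∀ (α : ℂ) (a b c : V), tp a (α • b) c = conj α • tp a b c
  jordan_identity : ∀ a b x y z : V,
    tp a b (tp x y z) = tp (tp a b x) y z - tp x (tp b a y) z + tp x y (tp a b z)
  hermitian : ∀ (a : V) (t : ℝ), ‖NormedSpace.exp ((Complex.I * (t : ℂ)) • box a a)‖ = 1
  nonneg_spectrum : ∀ a : V, spectrum ℂ (box a a) ⊆ {z : ℂ | 0 ≤ z.re ∧ z.im = 0}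
  norm_tp_le : ∀ a b c : V, ‖tp a b c‖ ≤ ‖a‖ * ‖b‖ * ‖c‖
  norm_tp_self : ∀ a : V, ‖tp a a a‖ = ‖a‖ ^ 3

namespace JBStarTriple

variable {V : Type*} [NormedAddCommGroup V] [NormedSpace ℂ V] [JBStarTriple V]

def IsTripotent (e : V) : Prop := tp e e e = e

def Orthogonal (a b : V) : Prop := ∀ x : V, tp a b x = 0

def IsMinimalTripotent (e : V) : Prop :=
  IsTripotent e ∧ e ≠ 0 ∧ ∀ v : V, ∃ α : ℂ, tp e v e = α • e

def Peirce2 (e : V) : Set V := {x : V | tp e e x = x}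

/-- `c ≤ e` for tripotents: `e - c` is a tripotent orthogonal to `c`. -/
def TripLE (c e : V) : Prop := IsTripotent (e - c) ∧ Orthogonal (e - c) c

/-- The box operator as a `ℂ`-linear map. -/
def boxL (x y : V) : V →ₗ[ℂ] V where
  toFun v := tp x y v
  map_add' u v := by
    show tp x y (u + v) = tp x y u + tp x y v
    rw [symm_outer x y (u + v), add_fst, ← symm_outer x y u, ← symm_outer x y v]
  map_smul' α v := by
    show tp x y (α • v) = α • tp x y v
    rw [symm_outer x y (α • v), smul_fst, ← symm_outer x y v]

/-- The trace inner product `⟨x, y⟩ = Tr (x □ y)`. -/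
noncomputable def trform (x y : V) : ℂ := LinearMap.trace ℂ V (boxL x y)

end JBStarTriple

open JBStarTriple

namespace JBSTAux

open JBStarTriple

variable {V : Type*} [NormedAddCommGroup V] [NormedSpace ℂ V] [JBStarTriple V]

section identities

variable (x y : V)

/-- ID2 -/
lemma id2 (w : V) : tp x (tp y x w) x = tp (tp x y x) w x := by
  have E1 := jordan_identity x w x y x
  have E2 := jordan_identity x y x w x
  have s1 : tp x w (tp x y x) = tp (tp x y x) w x := symm_outer _ _ _
  have s2 : tp x y (tp x w x) = tp (tp x w x) y x := symm_outer _ _ _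
  have s3 : tp x (tp w x y) x = tp x (tp y x w) x := by rw [symm_outer w x y]
  linear_combination (norm := module) (1/3 : ℂ) • E1 + (2/3 : ℂ) • E2 + (1/3 : ℂ) • s1
    - (1/3 : ℂ) • s2 - (1/3 : ℂ) • s3

/-- T1 : Q_y L(x,y) = L(y,x) Q_y -/
lemma t1 (v : V) : tp y x (tp y v y) = tp y (tp x y v) y := by
  have J := jordan_identity y x y v y
  have s1 : tp y v (tp y x y) = tp (tp y x y) v y := symm_outer _ _ _
  have i2 := id2 y x v
  linear_combination (norm := module) J + s1 - (2 : ℂ) • i2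

/-- ID4 -/
lemma id4 (a w : V) :
    tp a y (tp x w x) + tp x (tp y a w) x = tp (tp x y a) w x + tp (tp x y a) w x := by
  have J := jordan_identity a y x w x
  have s1 : tp (tp a y x) w x = tp (tp x y a) w x := by rw [symm_outer a y x]
  have s2 : tp x w (tp a y x) = tp (tp x y a) w x := by
    rw [symm_outer a y x, symm_outer x w (tp x y a)]
  linear_combination (norm := module) J + s1 + s2

/-- [L,P] = 0 pointwise -/
lemma lp_comm (v : V) :
    tp x y (tp x (tp y v y) x) = tp x (tp y (tp x y v) y) x := by
  have J := jordan_identity x y x (tp y v y) x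
  have s : tp x (tp y v y) (tp x y x) = tp (tp x y x) (tp y v y) x := symm_outer _ _ _
  have i2 := id2 x y (tp y v y)
  have r : tp x (tp y (tp x y v) y) x = tp x (tp y x (tp y v y)) x := by rw [t1]
  linear_combination (norm := module) J + s - (2 : ℂ) • i2 - r

/-- star1 : {L, box a y} = box (tp x y a) y + K x a -/
lemma star1 (a v : V) :
    tp x y (tp a y v) + tp a y (tp x y v) = tp (tp x y a) y v + tp x (tp y v y) a := by
  have J := jordan_identity v y a y x
  have p1 : tp v y (tp a y x) = tp (tp x y a) y v := by
    rw [symm_outer a y x, symm_outer v y (tp x y a)]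
  have p2 : tp (tp v y a) y x = tp x y (tp a y v) := by
    rw [symm_outer v y a, symm_outer (tp a y v) y x]
  have p3 : tp a (tp y v y) x = tp x (tp y v y) a := symm_outer _ _ _
  have p4 : tp a y (tp v y x) = tp a y (tp x y v) := by rw [symm_outer v y x]
  linear_combination (norm := module) - J + p1 - p2 + p3 - p4

/-- star2 -/
lemma star2 (a b v : V) :
    tp x y (tp a (tp y v y) b) + tp a (tp y (tp x y v) y) b
      = tp (tp x y a) (tp y v y) b + tp a (tp y v y) (tp x y b) := by
  have J := jordan_identity x y a (tp y v y) b
  have q : tp a (tp y (tp x y v) y) b = tp a (tp y x (tp y v y)) b := by rw [t1]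
  linear_combination (norm := module) J + q

/-- star3 -/
lemma star3 (a v : V) :
    tp x (tp y (tp a y v) y) x + tp a y (tp x (tp y v y) x)
      = tp (tp x y a) (tp y v y) x + tp (tp x y a) (tp y v y) x := by
  have h1 : tp x (tp y (tp a y v) y) x = tp x (tp y a (tp y v y)) x := by rw [t1]
  have i4 := id4 x y a (tp y v y)
  linear_combination (norm := module) h1 + i4

end identities

/-- the operator `v ↦ {a, {y, v, y}, b}` -/
noncomputable def Kop (y a b : V) : V →L[ℂ] V :=
  LinearMap.mkContinuous
    { toFun := fun v => tp a (tp y v y) b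
      map_add' := fun u v => by show tp a (tp y (u + v) y) b = tp a (tp y u y) b + tp a (tp y v y) b; rw [show tp y (u + v) y = tp y u y + tp y v y from add_snd y u v y, add_snd]
      map_smul' := fun c v => by
        simp only [RingHom.id_apply]
        rw [show tp y (c • v) y = conj c • tp y v y from conj_snd c y v y, conj_snd]
        simp }
    (‖a‖ * ‖y‖ * ‖y‖ * ‖b‖)
    (by
      intro v
      calc ‖tp a (tp y v y) b‖ ≤ ‖a‖ * ‖tp y v y‖ * ‖b‖ := norm_tp_le _ _ _
        _ ≤ ‖a‖ * (‖y‖ * ‖v‖ * ‖y‖) * ‖b‖ := by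
            exact mul_le_mul_of_nonneg_right
              (mul_le_mul_of_nonneg_left (norm_tp_le y v y) (norm_nonneg a))
              (norm_nonneg b)
        _ = ‖a‖ * ‖y‖ * ‖y‖ * ‖b‖ * ‖v‖ := by ring)

@[simp] lemma Kop_apply (y a b v : V) : Kop y a b v = tp a (tp y v y) b := rfl

lemma Kop_norm_le (y a b : V) : ‖Kop y a b‖ ≤ ‖a‖ * ‖y‖ * ‖y‖ * ‖b‖ :=
  LinearMap.mkContinuous_norm_le _ (by positivity) _

lemma Kop_comm (y a b : V) : Kop y a b = Kop y b a := by
  ext v; simp [Kop_apply, symm_outer a _ b]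

lemma box_norm_le (a b : V) : ‖(box a b : V →L[ℂ] V)‖ ≤ ‖a‖ * ‖b‖ := by
  refine ContinuousLinearMap.opNorm_le_bound _ (by positivity) (fun v => ?_)
  rw [box_apply]
  calc ‖tp a b v‖ ≤ ‖a‖ * ‖b‖ * ‖v‖ := norm_tp_le _ _ _


-- ===== operator-level machinery =====
section ops
variable (x y : V)

/-- iterated element `m_k` -/
noncomputable def mseq : ℕ → V
  | 0 => x
  | (k+1) => tp x y (mseq k)

@[simp] lemma mseq_zero : mseq x y 0 = x := rfl
@[simp] lemma mseq_succ (k : ℕ) : mseq x y (k+1) = tp x y (mseq x y k) := rfl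

local notation "L" => (box x y : V →L[ℂ] V)
local notation "P" => Kop y x x
local notation "m" => mseq x y

lemma op_star1 (a : V) :
    L * box a y + box a y * L = box (tp x y a) y + Kop y x a := by
  ext v
  simp only [ContinuousLinearMap.add_apply, ContinuousLinearMap.mul_apply, box_apply, Kop_apply]
  exact star1 x y a v

lemma op_star2 (a b : V) :
    L * Kop y a b + Kop y a b * L = Kop y (tp x y a) b + Kop y a (tp x y b) := by
  ext v
  simp only [ContinuousLinearMap.add_apply, ContinuousLinearMap.mul_apply, box_apply, Kop_apply]
  exact star2 x y a b v

lemma op_star3 (a : V) :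
    P * box a y + box a y * P = Kop y (tp x y a) x + Kop y (tp x y a) x := by
  ext v
  simp only [ContinuousLinearMap.add_apply, ContinuousLinearMap.mul_apply, box_apply, Kop_apply]
  exact star3 x y a v

lemma op_lp : L * P = P * L := by
  ext v
  simp only [ContinuousLinearMap.mul_apply, box_apply, Kop_apply]
  exact lp_comm x y v

lemma shuffle {R : Type*} [Ring R] {l p a : R} (h : l*p = p*l) :
    p*(l*a + a*l) + (l*a + a*l)*p = l*(p*a + a*p) + (p*a + a*p)*l := by
  have h1 : p*(l*a) = l*(p*a) := by rw [← mul_assoc, ← h, mul_assoc]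
  have h2 : (a*l)*p = (a*p)*l := by rw [mul_assoc, h, ← mul_assoc]
  have h3 : p*(a*l) = (p*a)*l := (mul_assoc _ _ _).symm
  have h4 : (l*a)*p = l*(a*p) := mul_assoc _ _ _
  simp only [mul_add, add_mul]
  linear_combination (norm := module) h1 + h2 + h3 + h4

lemma op_star4 : ∀ i j : ℕ, P * Kop y (m i) (m j) + Kop y (m i) (m j) * P
    = Kop y (m (i+1)) (m (j+1)) + Kop y (m (i+1)) (m (j+1)) := by
  intro i
  induction i with
  | zero =>
    intro j
    show P * Kop y x (m j) + Kop y x (m j) * P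
        = Kop y (m 1) (m (j+1)) + Kop y (m 1) (m (j+1))
    -- base case
    have hK : L * box (m j) y + box (m j) y * L = box (m (j+1)) y + Kop y x (m j) :=
      op_star1 x y (m j)
    have key := shuffle (a := box (m j) y) (op_lp x y)
    have h3j : P * box (m j) y + box (m j) y * P = Kop y (m (j+1)) x + Kop y (m (j+1)) x :=
      op_star3 x y (m j)
    have h3j' : P * box (m (j+1)) y + box (m (j+1)) y * P
        = Kop y (m (j+2)) x + Kop y (m (j+2)) x := op_star3 x y (m (j+1))
    have h2 : L * Kop y (m (j+1)) x + Kop y (m (j+1)) x * L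
        = Kop y (m (j+2)) x + Kop y (m (j+1)) (m 1) := by
      have := op_star2 x y (m (j+1)) x
      simpa using this
    have comm : Kop y (m (j+1)) (m 1) = Kop y (m 1) (m (j+1)) := Kop_comm _ _ _
    -- rewrite key using hK and h3j
    rw [hK, h3j] at key
    simp only [mul_add, add_mul] at key
    -- key : P*b' + P*K0 + (b'*P + K0*P) = ...
    linear_combination (norm := module) key - h3j' + (2:ℂ) • h2 + (2:ℂ) • comm
  | succ i ih =>
    intro j
    show P * Kop y (m (i+1)) (m j) + Kop y (m (i+1)) (m j) * P
        = Kop y (m (i+2)) (m (j+1)) + Kop y (m (i+2)) (m (j+1))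
    have hK : L * Kop y (m i) (m j) + Kop y (m i) (m j) * L
        = Kop y (m (i+1)) (m j) + Kop y (m i) (m (j+1)) := by
      have := op_star2 x y (m i) (m j); simpa using this
    have key := shuffle (a := Kop y (m i) (m j)) (op_lp x y)
    rw [hK, ih j] at key
    simp only [mul_add, add_mul] at key
    have h2 : L * Kop y (m (i+1)) (m (j+1)) + Kop y (m (i+1)) (m (j+1)) * L
        = Kop y (m (i+2)) (m (j+1)) + Kop y (m (i+1)) (m (j+2)) := by
      have := op_star2 x y (m (i+1)) (m (j+1)); simpa using this
    have hij1 := ih (j+1)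
    linear_combination (norm := module) key + (2:ℂ) • h2 - hij1
  end ops

-- ===== H sequence, intrinsic form, telescoping =====
section ops2
variable (x y : V)

local notation "L" => (box x y : V →L[ℂ] V)
local notation "P" => Kop y x x
local notation "m" => mseq x y

noncomputable def Hop : ℕ → (V →L[ℂ] V)
  | 0 => 1
  | 1 => box x y + box x y
  | (n+2) => box x y * Hop (n+1) + box x y * Hop (n+1) - Kop y x x * Hop n

noncomputable def SSSop : ℕ → (V →L[ℂ] V)
  | 0 => 0
  | (c+1) => ∑ p ∈ Finset.HasAntidiagonal.antidiagonal c, Kop y (mseq x y p.1) (mseq x y p.2)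

noncomputable def intr : ℕ → (V →L[ℂ] V)
  | 0 => 1
  | (n+1) => (box (mseq x y n) y + box (mseq x y n) y) + SSSop x y n

lemma commute_LH : ∀ n, Commute (box x y : V →L[ℂ] V) (Hop x y n) := by
  have key : ∀ n, Commute (box x y : V →L[ℂ] V) (Hop x y n)
      ∧ Commute (box x y : V →L[ℂ] V) (Hop x y (n+1)) := by
    intro n
    induction n with
    | zero => exact ⟨Commute.one_right _, (Commute.refl _).add_right (Commute.refl _)⟩
    | succ n ih =>
      refine ⟨ih.2, ?_⟩
      show Commute (box x y : V →L[ℂ] V)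
        (box x y * Hop x y (n+1) + box x y * Hop x y (n+1) - Kop y x x * Hop x y n)
      have cLP : Commute (box x y : V →L[ℂ] V) (Kop y x x) := op_lp x y
      exact (((Commute.refl _).mul_right ih.2).add_right
        ((Commute.refl _).mul_right ih.2)).sub_right (cLP.mul_right ih.1)
  exact fun n => (key n).1

lemma commute_PH : ∀ n, Commute (Kop y x x) (Hop x y n) := by
  have cPL : Commute (Kop y x x) (box x y : V →L[ℂ] V) := (op_lp x y).symm
  have key : ∀ n, Commute (Kop y x x) (Hop x y n) ∧ Commute (Kop y x x) (Hop x y (n+1)) := by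
    intro n
    induction n with
    | zero => exact ⟨Commute.one_right _, cPL.add_right cPL⟩
    | succ n ih =>
      refine ⟨ih.2, ?_⟩
      show Commute (Kop y x x)
        (box x y * Hop x y (n+1) + box x y * Hop x y (n+1) - Kop y x x * Hop x y n)
      exact ((cPL.mul_right ih.2).add_right (cPL.mul_right ih.2)).sub_right
        ((Commute.refl _).mul_right ih.1)
  exact fun n => (key n).1

-- sum reindexing
lemma shift_fst (c : ℕ) (f : ℕ → ℕ → (V →L[ℂ] V)) :
    ∑ p ∈ Finset.HasAntidiagonal.antidiagonal c, f (p.1+1) p.2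
      = (∑ p ∈ Finset.HasAntidiagonal.antidiagonal (c+1), f p.1 p.2) - f 0 (c+1) := by
  rw [Finset.Nat.antidiagonal_succ, Finset.sum_cons, Finset.sum_map]
  simp only [Function.Embedding.coe_prodMap, Function.Embedding.coeFn_mk,
    Function.Embedding.refl_apply, Prod.map_fst, Prod.map_snd, Nat.succ_eq_add_one]
  abel

lemma shift_snd (c : ℕ) (f : ℕ → ℕ → (V →L[ℂ] V)) :
    ∑ p ∈ Finset.HasAntidiagonal.antidiagonal c, f p.1 (p.2+1)
      = (∑ p ∈ Finset.HasAntidiagonal.antidiagonal (c+1), f p.1 p.2) - f (c+1) 0 := by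
  rw [Finset.Nat.antidiagonal_succ', Finset.sum_cons, Finset.sum_map]
  simp only [Function.Embedding.coe_prodMap, Function.Embedding.coeFn_mk,
    Function.Embedding.refl_apply, Prod.map_fst, Prod.map_snd, Nat.succ_eq_add_one]
  abel

lemma anti_L_SSS (n : ℕ) :
    L * SSSop x y n + SSSop x y n * L
      = (SSSop x y (n+1) + SSSop x y (n+1)) - Kop y x (m n) - Kop y (m n) x := by
  match n with
  | 0 =>
    have h1 : SSSop x y 1 = Kop y x x := by
      show ∑ p ∈ Finset.HasAntidiagonal.antidiagonal 0, Kop y (m p.1) (m p.2) = Kop y x x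
      rw [Finset.Nat.antidiagonal_zero, Finset.sum_singleton]
      rfl
    have h0 : SSSop x y 0 = 0 := rfl
    have hm0 : Kop y x (m 0) = Kop y x x := rfl
    have hm0' : Kop y (m 0) x = Kop y x x := rfl
    rw [h0, h1, hm0, hm0', mul_zero, zero_mul]
    abel
  | (c+1) =>
    have hterm : ∀ p ∈ Finset.HasAntidiagonal.antidiagonal c,
        L * Kop y (m p.1) (m p.2) + Kop y (m p.1) (m p.2) * L
          = Kop y (m (p.1+1)) (m p.2) + Kop y (m p.1) (m (p.2+1)) := by
      intro p _
      simpa using op_star2 x y (m p.1) (m p.2)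
    have expand : L * SSSop x y (c+1) + SSSop x y (c+1) * L
        = ∑ p ∈ Finset.HasAntidiagonal.antidiagonal c,
            (L * Kop y (m p.1) (m p.2) + Kop y (m p.1) (m p.2) * L) := by
      show L * (∑ p ∈ Finset.HasAntidiagonal.antidiagonal c, Kop y (m p.1) (m p.2))
          + (∑ p ∈ Finset.HasAntidiagonal.antidiagonal c, Kop y (m p.1) (m p.2)) * L = _
      rw [Finset.mul_sum, Finset.sum_mul, ← Finset.sum_add_distrib]
    rw [expand, Finset.sum_congr rfl hterm, Finset.sum_add_distrib,
      shift_fst c (fun i j => Kop y (m i) (m j)), shift_snd c (fun i j => Kop y (m i) (m j))]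
    show (∑ p ∈ Finset.HasAntidiagonal.antidiagonal (c+1), Kop y (m p.1) (m p.2)) - Kop y (m 0) (m (c+1))
        + ((∑ p ∈ Finset.HasAntidiagonal.antidiagonal (c+1), Kop y (m p.1) (m p.2)) - Kop y (m (c+1)) (m 0))
        = (SSSop x y (c+2) + SSSop x y (c+2)) - Kop y x (m (c+1)) - Kop y (m (c+1)) x
    show (SSSop x y (c+2)) - Kop y x (m (c+1))
        + ((SSSop x y (c+2)) - Kop y (m (c+1)) x)
        = (SSSop x y (c+2) + SSSop x y (c+2)) - Kop y x (m (c+1)) - Kop y (m (c+1)) x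
    abel

lemma anti_P_SSS (n : ℕ) :
    P * SSSop x y n + SSSop x y n * P
      = (SSSop x y (n+2) + SSSop x y (n+2))
        - (Kop y x (m (n+1)) + Kop y x (m (n+1)))
        - (Kop y (m (n+1)) x + Kop y (m (n+1)) x) := by
  match n with
  | 0 =>
    have h2 : SSSop x y 2 = Kop y x (m 1) + Kop y (m 1) x := by
      show ∑ p ∈ Finset.HasAntidiagonal.antidiagonal 1, Kop y (m p.1) (m p.2) = _
      rw [show (1:ℕ) = 0 + 1 from rfl, Finset.Nat.antidiagonal_succ, Finset.sum_cons,
        Finset.sum_map, Finset.Nat.antidiagonal_zero, Finset.sum_singleton]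
      simp only [Function.Embedding.coe_prodMap, Function.Embedding.coeFn_mk,
        Function.Embedding.refl_apply, Prod.map_fst, Prod.map_snd]
      rfl
    have h0 : SSSop x y 0 = 0 := rfl
    rw [h0, h2, mul_zero, zero_mul]
    abel
  | (c+1) =>
    have hterm : ∀ p ∈ Finset.HasAntidiagonal.antidiagonal c,
        P * Kop y (m p.1) (m p.2) + Kop y (m p.1) (m p.2) * P
          = Kop y (m (p.1+1)) (m (p.2+1)) + Kop y (m (p.1+1)) (m (p.2+1)) :=
      fun p _ => op_star4 x y p.1 p.2
    have expand : P * SSSop x y (c+1) + SSSop x y (c+1) * P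
        = ∑ p ∈ Finset.HasAntidiagonal.antidiagonal c,
            (P * Kop y (m p.1) (m p.2) + Kop y (m p.1) (m p.2) * P) := by
      show P * (∑ p ∈ Finset.HasAntidiagonal.antidiagonal c, Kop y (m p.1) (m p.2))
          + (∑ p ∈ Finset.HasAntidiagonal.antidiagonal c, Kop y (m p.1) (m p.2)) * P = _
      rw [Finset.mul_sum, Finset.sum_mul, ← Finset.sum_add_distrib]
    have sh1 : ∑ p ∈ Finset.HasAntidiagonal.antidiagonal c, Kop y (m (p.1+1)) (m (p.2+1))
        = (∑ p ∈ Finset.HasAntidiagonal.antidiagonal (c+1), Kop y (m p.1) (m (p.2+1))) - Kop y (m 0) (m (c+2)) := by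
      exact shift_fst c (fun i j => Kop y (m i) (m (j+1)))
    have sh2 : ∑ p ∈ Finset.HasAntidiagonal.antidiagonal (c+1), Kop y (m p.1) (m (p.2+1))
        = (∑ p ∈ Finset.HasAntidiagonal.antidiagonal (c+2), Kop y (m p.1) (m p.2)) - Kop y (m (c+2)) (m 0) := by
      exact shift_snd (c+1) (fun i j => Kop y (m i) (m j))
    rw [expand, Finset.sum_congr rfl hterm, Finset.sum_add_distrib, sh1, sh2]
    show (SSSop x y (c+3)) - Kop y (m (c+2)) (m 0) - Kop y (m 0) (m (c+2))
        + ((SSSop x y (c+3)) - Kop y (m (c+2)) (m 0) - Kop y (m 0) (m (c+2)))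
        = (SSSop x y (c+3) + SSSop x y (c+3))
          - (Kop y x (m (c+2)) + Kop y x (m (c+2)))
          - (Kop y (m (c+2)) x + Kop y (m (c+2)) x)
    show (SSSop x y (c+3)) - Kop y (m (c+2)) x - Kop y x (m (c+2))
        + ((SSSop x y (c+3)) - Kop y (m (c+2)) x - Kop y x (m (c+2)))
        = (SSSop x y (c+3) + SSSop x y (c+3))
          - (Kop y x (m (c+2)) + Kop y x (m (c+2)))
          - (Kop y (m (c+2)) x + Kop y (m (c+2)) x)
    abel

lemma anti_L_intr (k : ℕ) :
    L * intr x y (k+1) + intr x y (k+1) * L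
      = (box (m (k+1)) y + box (m (k+1)) y) + (SSSop x y (k+1) + SSSop x y (k+1)) := by
  have h1 : L * box (m k) y + box (m k) y * L = box (m (k+1)) y + Kop y x (m k) := by
    simpa using op_star1 x y (m k)
  have h2 := anti_L_SSS x y k
  have hc : Kop y x (m k) = Kop y (m k) x := Kop_comm _ _ _
  have unfold1 : intr x y (k+1) = (box (m k) y + box (m k) y) + SSSop x y k := rfl
  rw [unfold1]
  simp only [mul_add, add_mul]
  linear_combination (norm := module) (2:ℂ) • h1 + h2 + hc

lemma anti_P_intr (k : ℕ) :
    P * intr x y k + intr x y k * P = SSSop x y (k+1) + SSSop x y (k+1) := by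
  match k with
  | 0 =>
    show P * 1 + 1 * P = _
    have h1 : SSSop x y 1 = Kop y x x := by
      show ∑ p ∈ Finset.HasAntidiagonal.antidiagonal 0, Kop y (m p.1) (m p.2) = Kop y x x
      rw [Finset.Nat.antidiagonal_zero, Finset.sum_singleton]
      rfl
    show P * 1 + 1 * P = SSSop x y 1 + SSSop x y 1
    rw [h1, mul_one, one_mul]
  | (c+1) =>
    have h1 : P * box (m c) y + box (m c) y * P
        = Kop y (m (c+1)) x + Kop y (m (c+1)) x := by
      simpa using op_star3 x y (m c)
    have h2 := anti_P_SSS x y c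
    have hc : Kop y x (m (c+1)) = Kop y (m (c+1)) x := Kop_comm _ _ _
    have unfold1 : intr x y (c+1) = (box (m c) y + box (m c) y) + SSSop x y c := rfl
    rw [unfold1]
    simp only [mul_add, add_mul]
    linear_combination (norm := module) (2:ℂ) • h1 + h2 - (2:ℂ) • hc

lemma cancel_two' {M : Type*} [AddCommGroup M] [Module ℂ M] {a b : M}
    (h : a + a = b + b) : a = b := by
  have h2 : (2:ℂ) • a = (2:ℂ) • b := by
    rw [two_smul, two_smul]; exact h
  exact smul_right_injective M (by norm_num) h2

lemma H_eq_intr : ∀ n, Hop x y n = intr x y n := by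
  have key : ∀ n, Hop x y n = intr x y n ∧ Hop x y (n+1) = intr x y (n+1) := by
    intro n
    induction n with
    | zero =>
      constructor
      · rfl
      · show box x y + box x y = (box (m 0) y + box (m 0) y) + SSSop x y 0
        show box x y + box x y = (box x y + box x y) + 0
        rw [add_zero]
    | succ n ih =>
      refine ⟨ih.2, ?_⟩
      apply cancel_two'
      have hrec : Hop x y (n+2)
          = box x y * Hop x y (n+1) + box x y * Hop x y (n+1) - Kop y x x * Hop x y n := rfl
      rw [hrec, ih.1, ih.2]
      have cLi : L * intr x y (n+1) = intr x y (n+1) * L := by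
        have := (commute_LH x y (n+1)).eq
        rwa [ih.2] at this
      have cPi : P * intr x y n = intr x y n * P := by
        have := (commute_PH x y n).eq
        rwa [ih.1] at this
      have lil := anti_L_intr x y n
      have pil := anti_P_intr x y n
      have unfold2 : intr x y (n+2) = (box (m (n+1)) y + box (m (n+1)) y) + SSSop x y (n+1) := rfl
      rw [unfold2]
      linear_combination (norm := module) (2:ℂ) • cLi + (2:ℂ) • lil - cPi - pil
  exact fun n => (key n).1

end ops2

-- ===== norms and the lower bound =====
section ops3
variable (x y : V)

local notation "L" => (box x y : V →L[ℂ] V)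
local notation "P" => Kop y x x
local notation "m" => mseq x y

lemma norm_m_le : ∀ k, ‖m k‖ ≤ ‖x‖ * (‖x‖*‖y‖)^k := by
  intro k
  induction k with
  | zero => simp
  | succ k ih =>
    calc ‖m (k+1)‖ = ‖tp x y (m k)‖ := rfl
      _ ≤ ‖x‖ * ‖y‖ * ‖m k‖ := norm_tp_le _ _ _
      _ ≤ ‖x‖ * ‖y‖ * (‖x‖ * (‖x‖*‖y‖)^k) := by
          have h0 : (0:ℝ) ≤ ‖x‖ * ‖y‖ := by positivity
          exact mul_le_mul_of_nonneg_left ih h0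
      _ = ‖x‖ * (‖x‖*‖y‖)^(k+1) := by ring

lemma norm_b_le (k : ℕ) : ‖(box (m k) y : V →L[ℂ] V)‖ ≤ (‖x‖*‖y‖)^(k+1) := by
  calc ‖(box (m k) y : V →L[ℂ] V)‖ ≤ ‖m k‖ * ‖y‖ := box_norm_le _ _
    _ ≤ (‖x‖ * (‖x‖*‖y‖)^k) * ‖y‖ :=
        mul_le_mul_of_nonneg_right (norm_m_le x y k) (norm_nonneg _)
    _ = (‖x‖*‖y‖)^(k+1) := by ring

lemma norm_K_m_le (i j : ℕ) : ‖Kop y (m i) (m j)‖ ≤ (‖x‖*‖y‖)^(i+j+2) := by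
  have h1 := Kop_norm_le y (m i) (m j)
  have h2 : ‖m i‖ * ‖y‖ * ‖y‖ * ‖m j‖ ≤ (‖x‖ * (‖x‖*‖y‖)^i) * ‖y‖ * ‖y‖ * (‖x‖ * (‖x‖*‖y‖)^j) := by
    have := norm_m_le x y i
    have := norm_m_le x y j
    have h0 : (0:ℝ) ≤ ‖y‖ := norm_nonneg _
    gcongr <;> positivity
  calc ‖Kop y (m i) (m j)‖ ≤ ‖m i‖ * ‖y‖ * ‖y‖ * ‖m j‖ := h1
    _ ≤ (‖x‖ * (‖x‖*‖y‖)^i) * ‖y‖ * ‖y‖ * (‖x‖ * (‖x‖*‖y‖)^j) := h2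
    _ = (‖x‖*‖y‖)^(i+j+2) := by ring

lemma norm_SSS_le (n : ℕ) : ‖SSSop x y n‖ ≤ (n:ℝ) * (‖x‖*‖y‖)^(n+1) := by
  match n with
  | 0 => simp [show SSSop x y 0 = 0 from rfl]
  | (c+1) =>
    have h1 : ‖SSSop x y (c+1)‖
        ≤ ∑ p ∈ Finset.HasAntidiagonal.antidiagonal c, ‖Kop y (m p.1) (m p.2)‖ := norm_sum_le _ _
    have h2 : ∑ p ∈ Finset.HasAntidiagonal.antidiagonal c, ‖Kop y (m p.1) (m p.2)‖
        ≤ ∑ _p ∈ Finset.HasAntidiagonal.antidiagonal c, (‖x‖*‖y‖)^(c+2) := by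
      refine Finset.sum_le_sum (fun p hp => ?_)
      have hij : p.1 + p.2 = c := Finset.HasAntidiagonal.mem_antidiagonal.mp hp
      have := norm_K_m_le x y p.1 p.2
      rwa [hij] at this
    have h3 : ∑ _p ∈ Finset.HasAntidiagonal.antidiagonal c, (‖x‖*‖y‖)^(c+2) = ((c:ℝ)+1) * (‖x‖*‖y‖)^(c+2) := by
      rw [Finset.sum_const, Finset.Nat.card_antidiagonal, nsmul_eq_mul]
      push_cast
      ring
    calc ‖SSSop x y (c+1)‖ ≤ ∑ _p ∈ Finset.HasAntidiagonal.antidiagonal c, (‖x‖*‖y‖)^(c+2) := h1.trans h2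
      _ = ((c:ℝ)+1) * (‖x‖*‖y‖)^(c+2) := h3
      _ = ((c+1 : ℕ):ℝ) * (‖x‖*‖y‖)^((c+1)+1) := by push_cast; ring

lemma norm_H_le (n : ℕ) : ‖Hop x y n‖ ≤ ((n:ℝ)+1) * (‖x‖*‖y‖)^n := by
  match n with
  | 0 =>
    have : ‖Hop x y 0‖ ≤ 1 := ContinuousLinearMap.norm_id_le
    simpa using this
  | (k+1) =>
    rw [H_eq_intr]
    have h1 : ‖intr x y (k+1)‖
        ≤ ‖(box (m k) y : V →L[ℂ] V) + box (m k) y‖ + ‖SSSop x y k‖ := norm_add_le _ _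
    have h2 : ‖(box (m k) y : V →L[ℂ] V) + box (m k) y‖
        ≤ (‖x‖*‖y‖)^(k+1) + (‖x‖*‖y‖)^(k+1) :=
      (norm_add_le _ _).trans (add_le_add (norm_b_le x y k) (norm_b_le x y k))
    have h3 := norm_SSS_le x y k
    have goal_eq : (((k+1:ℕ):ℝ)+1) * (‖x‖*‖y‖)^(k+1)
        = ((‖x‖*‖y‖)^(k+1) + (‖x‖*‖y‖)^(k+1)) + (k:ℝ) * (‖x‖*‖y‖)^(k+1) := by
      push_cast; ring
    rw [goal_eq]
    exact h1.trans (add_le_add h2 h3)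

noncomputable def Wop (N : ℕ) : V →L[ℂ] V := ∑ n ∈ Finset.range (N+1), Hop x y n

noncomputable def Bop : V →L[ℂ] V := 1 - box x y - box x y + Kop y x x

lemma BW : ∀ N, Bop x y * Wop x y N = 1 - Hop x y (N+1) + P * Hop x y N := by
  intro N
  induction N with
  | zero =>
    have hH0 : Hop x y 0 = 1 := rfl
    have hW : Wop x y 0 = 1 := by
      show ∑ n ∈ Finset.range 1, Hop x y n = 1
      rw [Finset.sum_range_one, hH0]
    rw [hW, mul_one, hH0, mul_one]
    show 1 - L - L + P = 1 - (L + L) + P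
    abel
  | succ N ih =>
    have hW : Wop x y (N+1) = Wop x y N + Hop x y (N+1) := by
      show ∑ n ∈ Finset.range (N+2), Hop x y n = _
      rw [Finset.sum_range_succ]
      rfl
    have hBH : Bop x y * Hop x y (N+1)
        = Hop x y (N+1) - L * Hop x y (N+1) - L * Hop x y (N+1) + P * Hop x y (N+1) := by
      show (1 - L - L + P) * Hop x y (N+1) = _
      rw [add_mul, sub_mul, sub_mul, one_mul]
    have hrec : Hop x y (N+2) = L * Hop x y (N+1) + L * Hop x y (N+1) - P * Hop x y N := rfl
    rw [hW, mul_add]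
    linear_combination (norm := module) ih + hBH + hrec

lemma commute_BW (N : ℕ) : Wop x y N * Bop x y = Bop x y * Wop x y N := by
  have hL : Commute (box x y : V →L[ℂ] V) (Wop x y N) := by
    show Commute (box x y : V →L[ℂ] V) (∑ n ∈ Finset.range (N+1), Hop x y n)
    exact Commute.sum_right _ _ _ (fun n _ => commute_LH x y n)
  have hP : Commute (Kop y x x) (Wop x y N) := by
    show Commute (Kop y x x) (∑ n ∈ Finset.range (N+1), Hop x y n)
    exact Commute.sum_right _ _ _ (fun n _ => commute_PH x y n)
  have : Commute (Bop x y) (Wop x y N) := by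
    show Commute (1 - L - L + P) (Wop x y N)
    exact (((Commute.one_left _).sub_left hL).sub_left hL).add_left hP
  exact this.symm

/-- Main lower bound for the Bergman-type operator. -/
theorem bergman_lower_bound (hr : ‖x‖ * ‖y‖ < 1) :
    ∃ C : ℝ, 0 < C ∧ ∀ v : V,
      ‖v‖ ≤ C * ‖v - (tp x y v + tp x y v) + tp x (tp y v y) x‖ := by
  set r := ‖x‖ * ‖y‖ with hrdef
  have hr0 : 0 ≤ r := by positivity
  have hsum : Summable (fun n : ℕ => ((n:ℝ)+1) * r^n) := by
    have h1 : Summable (fun n : ℕ => (n:ℝ)^1 * r^n) :=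
      summable_pow_mul_geometric_of_norm_lt_one 1 (by
        rw [Real.norm_eq_abs, abs_of_nonneg hr0]; exact hr)
    have h2 : Summable (fun n : ℕ => r^n) := summable_geometric_of_lt_one hr0 hr
    have := h1.add h2
    refine this.congr (fun n => ?_)
    push_cast
    ring
  have htend : Filter.Tendsto (fun n : ℕ => ((n:ℝ)+1) * r^n) Filter.atTop (nhds 0) :=
    hsum.tendsto_atTop_zero
  have hev : ∀ᶠ n : ℕ in Filter.atTop, ((n:ℝ)+1) * r^n ≤ 1/4 :=
    htend.eventually_le_const (show (0:ℝ) < 1/4 by norm_num)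
  obtain ⟨N0, hN0⟩ := Filter.eventually_atTop.mp hev
  set N := N0
  have hN1 : ((N:ℝ)+1) * r^N ≤ 1/4 := hN0 N (le_refl _)
  have hN2 : (((N+1:ℕ):ℝ)+1) * r^(N+1) ≤ 1/4 := hN0 (N+1) (Nat.le_succ _)
  set C0 : ℝ := ∑' n : ℕ, ((n:ℝ)+1) * r^n with hC0
  have hterm_nonneg : ∀ n : ℕ, 0 ≤ ((n:ℝ)+1) * r^n := fun n => by positivity
  have hC0_ge1 : 1 ≤ C0 := by
    have := Summable.le_tsum hsum 0 (fun i _ => hterm_nonneg i)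
    simpa using this
  have hWnorm : ‖Wop x y N‖ ≤ C0 := by
    calc ‖Wop x y N‖ ≤ ∑ n ∈ Finset.range (N+1), ‖Hop x y n‖ := norm_sum_le _ _
      _ ≤ ∑ n ∈ Finset.range (N+1), ((n:ℝ)+1) * r^n :=
          Finset.sum_le_sum (fun n _ => norm_H_le x y n)
      _ ≤ C0 := Summable.sum_le_tsum _ (fun i _ => hterm_nonneg i) hsum
  have hPnorm : ‖Kop y x x‖ ≤ 1 := by
    have h1 : ‖Kop y x x‖ ≤ ‖x‖*‖y‖*‖y‖*‖x‖ := Kop_norm_le y x x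
    have h2 : ‖x‖*‖y‖*‖y‖*‖x‖ = r^2 := by rw [hrdef]; ring
    have h3 : r^2 ≤ 1 := by nlinarith
    linarith [h1, h2 ▸ h1]
  have herr : ‖Hop x y (N+1) - Kop y x x * Hop x y N‖ ≤ 1/2 := by
    have h1 : ‖Hop x y (N+1) - Kop y x x * Hop x y N‖
        ≤ ‖Hop x y (N+1)‖ + ‖Kop y x x * Hop x y N‖ := norm_sub_le _ _
    have h2 : ‖Kop y x x * Hop x y N‖ ≤ ‖Kop y x x‖ * ‖Hop x y N‖ := norm_mul_le _ _
    have h3 : ‖Kop y x x‖ * ‖Hop x y N‖ ≤ 1 * (((N:ℝ)+1) * r^N) := by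
      have := norm_H_le x y N
      exact mul_le_mul hPnorm this (norm_nonneg _) (by norm_num)
    have h4 : ‖Hop x y (N+1)‖ ≤ (((N+1:ℕ):ℝ)+1) * r^(N+1) := norm_H_le x y (N+1)
    calc ‖Hop x y (N+1) - Kop y x x * Hop x y N‖
        ≤ ‖Hop x y (N+1)‖ + ‖Kop y x x * Hop x y N‖ := h1
      _ ≤ (((N+1:ℕ):ℝ)+1) * r^(N+1) + 1 * (((N:ℝ)+1) * r^N) := add_le_add h4 (h2.trans h3)
      _ ≤ 1/4 + 1 * (1/4) := by
          have := hN1; have := hN2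
          gcongr
      _ ≤ 1/2 := by norm_num
  refine ⟨2 * C0, by linarith, fun v => ?_⟩
  have hWB : Wop x y N * Bop x y = 1 - Hop x y (N+1) + Kop y x x * Hop x y N := by
    rw [commute_BW, BW]
  have happ : (Wop x y N) ((Bop x y) v)
      = v - (Hop x y (N+1) - Kop y x x * Hop x y N) v := by
    have := congrArg (fun (T : V →L[ℂ] V) => T v) hWB
    simp only [ContinuousLinearMap.mul_apply, ContinuousLinearMap.add_apply,
      ContinuousLinearMap.sub_apply, ContinuousLinearMap.one_apply] at this ⊢
    rw [this]
    abel
  have hband : ‖(Hop x y (N+1) - Kop y x x * Hop x y N) v‖ ≤ (1/2) * ‖v‖ := by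
    calc ‖(Hop x y (N+1) - Kop y x x * Hop x y N) v‖
        ≤ ‖Hop x y (N+1) - Kop y x x * Hop x y N‖ * ‖v‖ := ContinuousLinearMap.le_opNorm _ _
      _ ≤ (1/2) * ‖v‖ := mul_le_mul_of_nonneg_right herr (norm_nonneg _)
  have hv1 : ‖v‖ ≤ ‖(Wop x y N) ((Bop x y) v)‖ + (1/2) * ‖v‖ := by
    have : v = (Wop x y N) ((Bop x y) v) + (Hop x y (N+1) - Kop y x x * Hop x y N) v := by
      rw [happ]; abel
    calc ‖v‖ = ‖(Wop x y N) ((Bop x y) v) + (Hop x y (N+1) - Kop y x x * Hop x y N) v‖ := by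
          rw [← this]
      _ ≤ ‖(Wop x y N) ((Bop x y) v)‖ + ‖(Hop x y (N+1) - Kop y x x * Hop x y N) v‖ :=
          norm_add_le _ _
      _ ≤ ‖(Wop x y N) ((Bop x y) v)‖ + (1/2) * ‖v‖ := by linarith [hband]
  have hv2 : ‖(Wop x y N) ((Bop x y) v)‖ ≤ C0 * ‖(Bop x y) v‖ := by
    calc ‖(Wop x y N) ((Bop x y) v)‖ ≤ ‖Wop x y N‖ * ‖(Bop x y) v‖ :=
        ContinuousLinearMap.le_opNorm _ _
      _ ≤ C0 * ‖(Bop x y) v‖ := mul_le_mul_of_nonneg_right hWnorm (norm_nonneg _)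
  have hBv : (Bop x y) v = v - (tp x y v + tp x y v) + tp x (tp y v y) x := by
    show ((1 : V →L[ℂ] V) - box x y - box x y + Kop y x x) v = _
    simp only [ContinuousLinearMap.add_apply, ContinuousLinearMap.sub_apply,
      ContinuousLinearMap.one_apply, box_apply, Kop_apply]
    abel
  rw [← hBv]
  have : ‖v‖ ≤ 2 * C0 * ‖(Bop x y) v‖ := by
    have hb0 : 0 ≤ ‖(Bop x y) v‖ := norm_nonneg _
    nlinarith [hv1, hv2]
  exact this

end ops3

-- ===== auxiliary for the main theorem =====
section mainaux
variable {V : Type*} [NormedAddCommGroup V] [NormedSpace ℂ V] [JBStarTriple V]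

lemma tp_neg_snd (a b c : V) : tp a (-b) c = - tp a b c := by
  have := conj_snd (-1 : ℂ) a b c
  simpa using this

lemma tp_sub_snd (a b b' c : V) : tp a (b - b') c = tp a b c - tp a b' c := by
  rw [sub_eq_add_neg, add_snd, tp_neg_snd, sub_eq_add_neg]

lemma tp_neg_fst (a b c : V) : tp (-a) b c = - tp a b c := by
  have := smul_fst (-1 : ℂ) a b c
  simpa using this

lemma tp_sub_fst (a a' b c : V) : tp (a - a') b c = tp a b c - tp a' b c := by
  rw [sub_eq_add_neg, add_fst, tp_neg_fst, sub_eq_add_neg]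

lemma tp_sub_trd (a b c c' : V) : tp a b (c - c') = tp a b c - tp a b c' := by
  rw [symm_outer a b (c - c'), tp_sub_fst, symm_outer c b a, symm_outer c' b a]

end mainaux

end JBSTAux

open JBSTAux


/-- Let `D` be the open unit ball of a `JB*`-triple `V`, with Bergman operators
`B(b,c)x = x − 2{b,c,x} + {b,{c,x,c},b}`, inverse square roots `Bih z = B(z,z)^{−1/2}`
(so `B(z,z) ∘ Bih z ∘ Bih z = id` for `z ∈ D`), satisfying
`‖B(z,z)^{−1/2}‖ = (1−‖z‖²)⁻¹` and
`1 − ‖g_{−y}(z)‖² = ‖B(z,z)^{−1/2} B(z,y) B(y,y)^{−1/2}‖⁻¹` for `y, z ∈ D`, where `g`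
is the Möbius transformation of `D`.  If a sequence `(y_k) ⊂ D` converges in norm to
`ξ ∈ ∂D`, then `‖g_{−y_k}(z)‖ → 1` for every `z ∈ D`. -/
theorem stmt7 {V : Type*} [NormedAddCommGroup V] [NormedSpace ℂ V] [JBStarTriple V]
    (B : V → V → V →L[ℂ] V)
    (hB : ∀ b c x : V, B b c x = x - (2 : ℂ) • tp b c x + tp b (tp c x c) b)
    (Bih : V → V →L[ℂ] V)
    (hBsq : ∀ z : V, ‖z‖ < 1 → (B z z).comp ((Bih z).comp (Bih z)) = ContinuousLinearMap.id ℂ V)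
    (hBih : ∀ z : V, ‖z‖ < 1 → ‖Bih z‖ = (1 - ‖z‖ ^ 2)⁻¹)
    (g : V → V → V)
    (hg : ∀ y z : V, ‖y‖ < 1 → ‖z‖ < 1 →
      1 - ‖g (-y) z‖ ^ 2 = ‖(Bih z).comp ((B z y).comp (Bih y))‖⁻¹)
    (y : ℕ → V) (hy : ∀ k, ‖y k‖ < 1) (ξ : V) (hξ : ‖ξ‖ = 1)
    (hconv : Filter.Tendsto y Filter.atTop (nhds ξ))
    (z : V) (hz : ‖z‖ < 1) :
    Filter.Tendsto (fun k => ‖g (-(y k)) z‖) Filter.atTop (nhds 1) := by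

  classical
  have hrz : ‖z‖ * ‖ξ‖ < 1 := by rw [hξ, mul_one]; exact hz
  obtain ⟨C, hCpos, hC⟩ := bergman_lower_bound z ξ hrz
  have hlow : ∀ u : V, ‖u‖ ≤ C * ‖B z ξ u‖ := by
    intro u
    have h2 : B z ξ u = u - (tp z ξ u + tp z ξ u) + tp z (tp ξ u ξ) z := by
      rw [hB z ξ u, two_smul]
    rw [h2]
    exact hC u
  set μ : ℝ := ‖(B z z).comp (Bih z)‖ with hμdef
  have hmu : ∀ u : V, ‖u‖ ≤ μ * ‖Bih z u‖ := by
    intro u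
    have h1 : ((B z z).comp ((Bih z).comp (Bih z))) u = u := by
      rw [hBsq z hz]; rfl
    have h2 : ((B z z).comp (Bih z)) (Bih z u) = u := by
      simpa [ContinuousLinearMap.comp_apply] using h1
    calc ‖u‖ = ‖((B z z).comp (Bih z)) (Bih z u)‖ := by rw [h2]
      _ ≤ μ * ‖Bih z u‖ := ContinuousLinearMap.le_opNorm _ _
  have hμpos : 0 < μ := by
    by_contra hcon
    push_neg at hcon
    have h1 := hmu ξ
    have h2 : μ * ‖Bih z ξ‖ ≤ 0 := mul_nonpos_of_nonpos_of_nonneg hcon (norm_nonneg _)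
    rw [hξ] at h1
    linarith
  set Cz : ℝ := 2*‖z‖ + 2*‖z‖^2 with hCzdef
  have hpert : ∀ k, ∀ u : V, ‖B z (y k) u - B z ξ u‖ ≤ (Cz * ‖y k - ξ‖) * ‖u‖ := by
    intro k u
    have e1 : B z (y k) u - B z ξ u
        = (tp z ξ u - tp z (y k) u) + (tp z ξ u - tp z (y k) u)
          + (tp z (tp (y k) u (y k)) z - tp z (tp ξ u ξ) z) := by
      rw [hB z (y k) u, hB z ξ u, two_smul, two_smul]
      abel
    have e2 : tp z ξ u - tp z (y k) u = tp z (ξ - y k) u := (tp_sub_snd z ξ (y k) u).symm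
    have e3 : tp z (tp (y k) u (y k)) z - tp z (tp ξ u ξ) z
        = tp z (tp (y k - ξ) u (y k) + tp ξ u (y k - ξ)) z := by
      rw [add_snd, tp_sub_fst (y k) ξ u (y k), tp_sub_trd ξ u (y k) ξ,
        tp_sub_snd, tp_sub_snd]
      abel
    have n2 : ‖tp z (ξ - y k) u‖ ≤ ‖z‖ * ‖y k - ξ‖ * ‖u‖ := by
      have h := norm_tp_le z (ξ - y k) u
      rwa [show ‖ξ - y k‖ = ‖y k - ξ‖ from norm_sub_rev _ _] at h
    have n3 : ‖tp z (tp (y k - ξ) u (y k) + tp ξ u (y k - ξ)) z‖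
        ≤ ‖z‖ * (‖y k - ξ‖ * ‖u‖ * ‖y k‖ + 1 * ‖u‖ * ‖y k - ξ‖) * ‖z‖ := by
      have i1 : ‖tp (y k - ξ) u (y k) + tp ξ u (y k - ξ)‖
          ≤ ‖y k - ξ‖ * ‖u‖ * ‖y k‖ + 1 * ‖u‖ * ‖y k - ξ‖ := by
        refine (norm_add_le _ _).trans (add_le_add (norm_tp_le _ _ _) ?_)
        have h := norm_tp_le ξ u (y k - ξ)
        rwa [hξ] at h
      calc ‖tp z (tp (y k - ξ) u (y k) + tp ξ u (y k - ξ)) z‖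
          ≤ ‖z‖ * ‖tp (y k - ξ) u (y k) + tp ξ u (y k - ξ)‖ * ‖z‖ := norm_tp_le _ _ _
        _ ≤ ‖z‖ * (‖y k - ξ‖ * ‖u‖ * ‖y k‖ + 1 * ‖u‖ * ‖y k - ξ‖) * ‖z‖ := by
            have h0 : (0:ℝ) ≤ ‖z‖ := norm_nonneg _
            exact mul_le_mul_of_nonneg_right (mul_le_mul_of_nonneg_left i1 h0) h0
    calc ‖B z (y k) u - B z ξ u‖
        ≤ ‖tp z (ξ - y k) u‖ + ‖tp z (ξ - y k) u‖
          + ‖tp z (tp (y k - ξ) u (y k) + tp ξ u (y k - ξ)) z‖ := by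
          rw [e1, e2, e3]
          exact (norm_add_le _ _).trans (add_le_add (norm_add_le _ _) (le_refl _))
      _ ≤ (‖z‖ * ‖y k - ξ‖ * ‖u‖) + (‖z‖ * ‖y k - ξ‖ * ‖u‖)
          + ‖z‖ * (‖y k - ξ‖ * ‖u‖ * ‖y k‖ + 1 * ‖u‖ * ‖y k - ξ‖) * ‖z‖ :=
          add_le_add (add_le_add n2 n2) n3
      _ ≤ (Cz * ‖y k - ξ‖) * ‖u‖ := by
          have hyk : ‖y k‖ ≤ 1 := le_of_lt (hy k)
          have h0 : (0:ℝ) ≤ ‖z‖ := norm_nonneg _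
          have h1 : (0:ℝ) ≤ ‖u‖ := norm_nonneg _
          have h2 : (0:ℝ) ≤ ‖y k - ξ‖ := norm_nonneg _
          have hz1 : ‖z‖ ≤ 1 := le_of_lt hz
          rw [hCzdef]
          nlinarith [mul_nonneg (mul_nonneg h0 h2) h1, sq_nonneg ‖z‖,
            mul_nonneg h2 h1, mul_nonneg (mul_nonneg h2 h1) (mul_nonneg h0 h0)]
  have hdist0 : Filter.Tendsto (fun k => ‖y k - ξ‖) Filter.atTop (nhds 0) := by
    have h := (hconv.sub (tendsto_const_nhds (x := ξ))).norm
    simpa using h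
  have heps : Filter.Tendsto (fun k => Cz * ‖y k - ξ‖) Filter.atTop (nhds 0) := by
    have h := hdist0.const_mul Cz
    simpa using h
  have hevsmall : ∀ᶠ k in Filter.atTop, Cz * ‖y k - ξ‖ ≤ 1/(2*C) :=
    heps.eventually_le_const (by positivity)
  set T : ℕ → (V →L[ℂ] V) := fun k => (Bih z).comp ((B z (y k)).comp (Bih (y k))) with hTdef
  set a : ℕ → ℝ := fun k => 1 - ‖y k‖^2 with hadef
  have hapos : ∀ k, 0 < a k := by
    intro k
    show (0:ℝ) < 1 - ‖y k‖^2
    have h := hy k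
    have h0 : (0:ℝ) ≤ ‖y k‖ := norm_nonneg _
    nlinarith
  have hsk : ∀ k, ‖Bih (y k)‖ = (a k)⁻¹ := fun k => hBih (y k) (hy k)
  have hTk : ∀ᶠ k in Filter.atTop, ‖T k‖⁻¹ ≤ (4*C*μ) * a k := by
    refine hevsmall.mono (fun k hk => ?_)
    have hakpos := hapos k
    have hskpos : (0:ℝ) < (a k)⁻¹ := inv_pos.mpr hakpos
    have hlt : (a k)⁻¹ / 2 < ‖Bih (y k)‖ := by
      rw [hsk k]; linarith
    obtain ⟨v, hv1, hv2⟩ := ContinuousLinearMap.exists_lt_apply_of_lt_opNorm (Bih (y k)) hlt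
    set u : V := Bih (y k) v with hudef
    have hstep1 : (1/2) * ‖u‖ ≤ C * ‖B z (y k) u‖ := by
      have h1 := hlow u
      have h2 : ‖B z ξ u‖ ≤ ‖B z (y k) u‖ + ‖B z (y k) u - B z ξ u‖ := by
        calc ‖B z ξ u‖ = ‖B z (y k) u - (B z (y k) u - B z ξ u)‖ := by rw [sub_sub_cancel]
          _ ≤ ‖B z (y k) u‖ + ‖B z (y k) u - B z ξ u‖ := norm_sub_le _ _
      have h3 : ‖B z (y k) u - B z ξ u‖ ≤ (1/(2*C)) * ‖u‖ := by
        refine (hpert k u).trans ?_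
        exact mul_le_mul_of_nonneg_right hk (norm_nonneg _)
      have h4 : ‖u‖ ≤ C * ‖B z (y k) u‖ + C * ((1/(2*C)) * ‖u‖) := by
        calc ‖u‖ ≤ C * ‖B z ξ u‖ := h1
          _ ≤ C * (‖B z (y k) u‖ + ‖B z (y k) u - B z ξ u‖) :=
              mul_le_mul_of_nonneg_left h2 (le_of_lt hCpos)
          _ ≤ C * (‖B z (y k) u‖ + (1/(2*C)) * ‖u‖) := by
              refine mul_le_mul_of_nonneg_left ?_ (le_of_lt hCpos)
              linarith
          _ = C * ‖B z (y k) u‖ + C * ((1/(2*C)) * ‖u‖) := by ring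
      have h5 : C * ((1/(2*C)) * ‖u‖) = (1/2) * ‖u‖ := by
        field_simp
      linarith [h4, h5.symm.le]
    have hstep2 : ‖B z (y k) u‖ ≤ μ * ‖T k v‖ := by
      have hTv : T k v = Bih z (B z (y k) u) := by
        simp [hTdef, ContinuousLinearMap.comp_apply, hudef]
      rw [hTv]
      exact hmu _
    have hstep3 : ‖T k v‖ ≤ ‖T k‖ := by
      calc ‖T k v‖ ≤ ‖T k‖ * ‖v‖ := ContinuousLinearMap.le_opNorm _ _
        _ ≤ ‖T k‖ * 1 := mul_le_mul_of_nonneg_left (le_of_lt hv1) (norm_nonneg _)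
        _ = ‖T k‖ := mul_one _
    have hchain : (a k)⁻¹ / 4 ≤ (C*μ) * ‖T k‖ := by
      have h6 : (1/2) * ((a k)⁻¹/2) ≤ (1/2) * ‖u‖ := by
        have := le_of_lt hv2
        have h7 : (a k)⁻¹/2 ≤ ‖u‖ := this
        linarith
      have h8 : C * ‖B z (y k) u‖ ≤ C * (μ * ‖T k‖) := by
        refine mul_le_mul_of_nonneg_left ?_ (le_of_lt hCpos)
        calc ‖B z (y k) u‖ ≤ μ * ‖T k v‖ := hstep2
          _ ≤ μ * ‖T k‖ := mul_le_mul_of_nonneg_left hstep3 (le_of_lt hμpos)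
      calc (a k)⁻¹ / 4 = (1/2) * ((a k)⁻¹/2) := by ring
        _ ≤ (1/2) * ‖u‖ := h6
        _ ≤ C * ‖B z (y k) u‖ := hstep1
        _ ≤ C * (μ * ‖T k‖) := h8
        _ = (C*μ) * ‖T k‖ := by ring
    have hTpos : 0 < ‖T k‖ := by
      by_contra hcon
      push_neg at hcon
      have : (C*μ) * ‖T k‖ ≤ 0 := mul_nonpos_of_nonneg_of_nonpos (by positivity) hcon
      linarith [hchain, hskpos]
    have hone : ‖T k‖⁻¹ * ‖T k‖ = 1 := inv_mul_cancel₀ (ne_of_gt hTpos)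
    have hmul : 1 ≤ ((4*C*μ) * a k) * ‖T k‖ := by
      have h9 : a k * ((a k)⁻¹/4) ≤ a k * ((C*μ) * ‖T k‖) :=
        mul_le_mul_of_nonneg_left hchain (le_of_lt hakpos)
      have h10 : a k * ((a k)⁻¹/4) = 1/4 := by
        field_simp
      have h11 : 1/4 ≤ a k * ((C*μ) * ‖T k‖) := by linarith
      calc (1:ℝ) = 4*(1/4) := by norm_num
        _ ≤ 4*(a k * ((C*μ) * ‖T k‖)) := by linarith
        _ = ((4*C*μ) * a k) * ‖T k‖ := by ring
    have hfinal : ‖T k‖⁻¹ ≤ (4*C*μ) * a k := by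
      calc ‖T k‖⁻¹ = ‖T k‖⁻¹ * 1 := (mul_one _).symm
        _ ≤ ‖T k‖⁻¹ * (((4*C*μ) * a k) * ‖T k‖) :=
            mul_le_mul_of_nonneg_left hmul (inv_nonneg.mpr (norm_nonneg _))
        _ = ((4*C*μ) * a k) * (‖T k‖⁻¹ * ‖T k‖) := by ring
        _ = (4*C*μ) * a k := by rw [hone, mul_one]
    exact hfinal
  have ha0 : Filter.Tendsto a Filter.atTop (nhds 0) := by
    have hnorm : Filter.Tendsto (fun k => ‖y k‖) Filter.atTop (nhds ‖ξ‖) := hconv.norm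
    have hpow : Filter.Tendsto (fun k => ‖y k‖^2) Filter.atTop (nhds (‖ξ‖^2)) := hnorm.pow 2
    have h := (tendsto_const_nhds (x := (1:ℝ))).sub hpow
    rw [hξ] at h
    simpa using h
  have hfin : Filter.Tendsto (fun k => ‖T k‖⁻¹) Filter.atTop (nhds 0) := by
    refine squeeze_zero' (Filter.Eventually.of_forall (fun k => inv_nonneg.mpr (norm_nonneg _)))
      hTk ?_
    have h := ha0.const_mul (4*C*μ)
    simpa using h
  have hval : ∀ k, ‖g (-(y k)) z‖ = Real.sqrt (1 - ‖T k‖⁻¹) := by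
    intro k
    have h1 := hg (y k) z (hy k) hz
    have h2 : ‖g (-(y k)) z‖^2 = 1 - ‖T k‖⁻¹ := by
      have hTk' : T k = (Bih z).comp ((B z (y k)).comp (Bih (y k))) := rfl
      rw [hTk']
      linarith [h1]
    calc ‖g (-(y k)) z‖ = Real.sqrt (‖g (-(y k)) z‖^2) := (Real.sqrt_sq (norm_nonneg _)).symm
      _ = Real.sqrt (1 - ‖T k‖⁻¹) := by rw [h2]
  have hsq : Filter.Tendsto (fun k => Real.sqrt (1 - ‖T k‖⁻¹)) Filter.atTop (nhds 1) := by
    have h1 : Filter.Tendsto (fun k => 1 - ‖T k‖⁻¹) Filter.atTop (nhds 1) := by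
      have h := (tendsto_const_nhds (x := (1:ℝ))).sub hfin
      simpa using h
    have h2 := h1.sqrt
    rwa [Real.sqrt_one] at h2
  exact hsq.congr (fun k => (hval k).symm)
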